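/- For every k ≥ 1, let φ_k = Fd ↔ (F^k v ∧ F^k h) over visible input v, hidden input h, and guided output d. Then φ_k is ({v},{h},∅,{d})-realizable by a TGE whose state space and environment memory set both have size O(k), whereas in the corresponding two-process distributed (pipeline) architecture — where process P₂ receives v and h and must produce d without receiving programs from P₁ — the process P₂ needs at least Ω(k²) states. -/

import Mathlib

/-- LTL formulas over atomic propositions of type `α`. -/
inductive LTL (α : Type) : Type where
  | tt : LTL α
  | ff : LTL α
  | atom : α → LTL α
  | not : LTL α → LTL α
  | and : LTL α → LTL α → LTL α
  | or : LTL α → LTL α → LTL α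
  | next : LTL α → LTL α
  | untl : LTL α → LTL α → LTL α

namespace LTL

variable {α β : Type}

/-- Satisfaction of an LTL formula at position `j` of an infinite word. -/
def satAt (w : ℕ → Set α) : ℕ → LTL α → Prop
  | _, .tt => True
  | _, .ff => False
  | j, .atom a => a ∈ w j
  | j, .not φ => ¬ satAt w j φ
  | j, .and φ ψ => satAt w j φ ∧ satAt w j ψ
  | j, .or φ ψ => satAt w j φ ∨ satAt w j ψ
  | j, .next φ => satAt w (j+1) φ
  | j, .untl φ ψ => ∃ k, j ≤ k ∧ satAt w k ψ ∧ ∀ l, j ≤ l → l < k → satAt w l φ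

/-- A word satisfies a formula if it satisfies it at position 0. -/
def sat (w : ℕ → Set α) (φ : LTL α) : Prop := satAt w 0 φ

/-- Eventually. -/
def F (φ : LTL α) : LTL α := untl tt φ
/-- Always. -/
def G (φ : LTL α) : LTL α := not (F (not φ))
/-- Boolean equivalence. -/
def iff_ (φ ψ : LTL α) : LTL α := or (and φ ψ) (and (not φ) (not ψ))
/-- `Xpow k φ` is `X^k φ`. -/
def Xpow : ℕ → LTL α → LTL α
  | 0, φ => φ
  | k+1, φ => next (Xpow k φ)
/-- `Fpow k φ` is `F^{k+1} φ`: "`φ` holds in at least `k+1` positions".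
    (`F^1 p = F p`, `F^{j+1} p = F (p ∧ X (F^j p))`.) -/
def Fpow : ℕ → LTL α → LTL α
  | 0, φ => F φ
  | k+1, φ => F (and φ (next (Fpow k φ)))

/-- Relabeling of atoms. -/
def map (f : α → β) : LTL α → LTL β
  | .tt => .tt
  | .ff => .ff
  | .atom a => .atom (f a)
  | .not φ => .not (map f φ)
  | .and φ ψ => .and (map f φ) (map f ψ)
  | .or φ ψ => .or (map f φ) (map f ψ)
  | .next φ => .next (map f φ)
  | .untl φ ψ => .untl (map f φ) (map f ψ)

/-- A formula is temporal-operator free (propositional). -/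
def temporalFree : LTL α → Bool
  | .tt => true
  | .ff => true
  | .atom _ => true
  | .not φ => temporalFree φ
  | .and φ ψ => temporalFree φ && temporalFree ψ
  | .or φ ψ => temporalFree φ && temporalFree ψ
  | .next _ => false
  | .untl _ _ => false

/-- `props ψ`: the maximal propositional subformulas of `ψ`. -/
def props : LTL α → List (LTL α)
  | .tt => [.tt]
  | .ff => [.ff]
  | .atom a => [.atom a]
  | .not φ => if temporalFree (LTL.not φ) then [.not φ] else props φ
  | .and φ ψ => if temporalFree (LTL.and φ ψ) then [.and φ ψ] else props φ ++ props ψ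
  | .or φ ψ => if temporalFree (LTL.or φ ψ) then [.or φ ψ] else props φ ++ props ψ
  | .next φ => props φ
  | .untl φ ψ => props φ ++ props ψ

/-- All atoms of the formula satisfy predicate `p`. -/
def atomsAll (p : α → Bool) : LTL α → Bool
  | .tt => true
  | .ff => true
  | .atom a => p a
  | .not φ => atomsAll p φ
  | .and φ ψ => atomsAll p φ && atomsAll p ψ
  | .or φ ψ => atomsAll p φ && atomsAll p ψ
  | .next φ => atomsAll p φ
  | .untl φ ψ => atomsAll p φ && atomsAll p ψ

/-- Maximal subformulas all of whose atoms satisfy `p` (used for `cl_H`). -/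
def clP (p : α → Bool) : LTL α → List (LTL α)
  | .tt => []
  | .ff => []
  | .atom a => if p a then [.atom a] else []
  | .not φ => if atomsAll p (LTL.not φ) then [.not φ] else clP p φ
  | .and φ ψ => if atomsAll p (LTL.and φ ψ) then [.and φ ψ] else clP p φ ++ clP p ψ
  | .or φ ψ => if atomsAll p (LTL.or φ ψ) then [.or φ ψ] else clP p φ ++ clP p ψ
  | .next φ => clP p φ
  | .untl φ ψ => clP p φ ++ clP p ψ

/-- `clH p φ`: maximal subformulas of formulas in `props φ` all of whose atoms
    satisfy `p` (i.e. are hidden signals). -/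
def clH (p : α → Bool) (φ : LTL α) : List (LTL α) :=
  (props φ).foldr (fun ψ acc => clP p ψ ++ acc) []

/-- Propositional satisfaction of a formula by a single assignment. -/
def propSat (σ : Set α) (φ : LTL α) : Prop := satAt (fun _ => σ) 0 φ

end LTL

/-- A (full-visibility) finite-state transducer with inputs `ι`, outputs `o`
    and states `S`. -/
structure Transducer (ι o S : Type) where
  init : S
  trans : S → Set ι → S
  out : S → Set ι → Set o

namespace Transducer

variable {ι o S : Type}

/-- The run of a transducer on an input word. -/
def run (T : Transducer ι o S) (wI : ℕ → Set ι) : ℕ → S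
  | 0 => T.init
  | j+1 => T.trans (run T wI j) (wI j)

/-- The computation of a transducer on an input word, as a word over `2^{I ∪ O}`. -/
def comp (T : Transducer ι o S) (wI : ℕ → Set ι) (j : ℕ) : Set (ι ⊕ o) :=
  Sum.inl '' wI j ∪ Sum.inr '' T.out (T.run wI j) (wI j)

/-- `(I,O)`-realizability. -/
def Realizes (T : Transducer ι o S) (φ : LTL (ι ⊕ o)) : Prop :=
  ∀ wI, LTL.sat (T.comp wI) φ

end Transducer

/-- A transducer with a guided environment (TGE): visible inputs `ν`, hidden
    inputs `η`, controlled outputs `γc`, guided outputs `γg`, states `S`,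
    environment memory `M`.  Each transition emits an assignment to the
    controlled outputs together with a program `M × 2^H → M × 2^G`. -/
structure TGE (ν η γc γg S M : Type) where
  init : S
  m0 : M
  trans : S → Set ν → S
  out : S → Set ν → Set γc × (M → Set η → M × Set γg)

namespace TGE

variable {ν η γc γg S M : Type}

/-- The run of a TGE depends only on the visible inputs. -/
def run (T : TGE ν η γc γg S M) (wV : ℕ → Set ν) : ℕ → S
  | 0 => T.init
  | j+1 => T.trans (run T wV j) (wV j)

/-- The environment's memory sequence, obtained by iterating the emitted
    programs on the hidden inputs. -/
def mem (T : TGE ν η γc γg S M) (wV : ℕ → Set ν) (wH : ℕ → Set η) : ℕ → M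
  | 0 => T.m0
  | j+1 => ((T.out (T.run wV j) (wV j)).2 (mem T wV wH j) (wH j)).1

/-- The guided output at step `j`. -/
def guided (T : TGE ν η γc γg S M) (wV : ℕ → Set ν) (wH : ℕ → Set η) (j : ℕ) :
    Set γg :=
  ((T.out (T.run wV j) (wV j)).2 (T.mem wV wH j) (wH j)).2

/-- The computation of a TGE, over `2^{(V ∪ H) ∪ (C ∪ G)}`. -/
def comp (T : TGE ν η γc γg S M) (wV : ℕ → Set ν) (wH : ℕ → Set η) (j : ℕ) :
    Set ((ν ⊕ η) ⊕ (γc ⊕ γg)) :=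
  Sum.inl '' (Sum.inl '' wV j ∪ Sum.inr '' wH j) ∪
    Sum.inr '' (Sum.inl '' (T.out (T.run wV j) (wV j)).1 ∪
                 Sum.inr '' T.guided wV wH j)

/-- `(V,H,C,G)`-realizability of an LTL specification. -/
def Realizes (T : TGE ν η γc γg S M) (φ : LTL ((ν ⊕ η) ⊕ (γc ⊕ γg))) : Prop :=
  ∀ wV wH, LTL.sat (T.comp wV wH) φ

/-- `(V,H,C,G)`-realizability of an arbitrary language. -/
def RealizesL (T : TGE ν η γc γg S M)
    (L : Set (ℕ → Set ((ν ⊕ η) ⊕ (γc ⊕ γg)))) : Prop :=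
  ∀ wV wH, T.comp wV wH ∈ L

end TGE

/-- `φ_k = F d ↔ (F^k v ∧ F^k h)` with visible input `v`, hidden input `h`,
no controlled outputs, and guided output `d`. -/
def phi14 (k : ℕ) : LTL ((Unit ⊕ Unit) ⊕ (Empty ⊕ Unit)) :=
  LTL.iff_ (LTL.F (.atom (.inr (.inr ()))))
    (LTL.and (LTL.Fpow (k-1) (.atom (.inl (.inl ()))))
      (LTL.Fpow (k-1) (.atom (.inl (.inr ())))))

namespace Stmt14Aux

open Classical in
noncomputable def cnt (b : ℕ → Prop) : ℕ → ℕ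
  | 0 => 0
  | j+1 => cnt b j + if b j then 1 else 0

lemma cnt_succ (b : ℕ → Prop) (j : ℕ) :
    cnt b j ≤ cnt b (j+1) ∧ cnt b (j+1) ≤ cnt b j + 1 := by
  simp only [cnt]; split <;> omega

lemma cnt_succ_of (b : ℕ → Prop) {j : ℕ} (h : b j) : cnt b (j+1) = cnt b j + 1 := by
  simp only [cnt]; rw [if_pos h]

lemma cnt_succ_not (b : ℕ → Prop) {j : ℕ} (h : ¬ b j) : cnt b (j+1) = cnt b j := by
  simp only [cnt]; rw [if_neg h]; omega

lemma cnt_mono (b : ℕ → Prop) {i j : ℕ} (h : i ≤ j) : cnt b i ≤ cnt b j := by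
  induction j with
  | zero => simp [Nat.le_zero.mp h]
  | succ j ih =>
    rcases Nat.eq_or_lt_of_le h with rfl | h
    · omega
    · have := cnt_succ b j; have := ih (by omega); omega

lemma cnt_congr (b : ℕ → Prop) {j l : ℕ} (hjl : j ≤ l)
    (h : ∀ i, j ≤ i → i < l → ¬ b i) : cnt b l = cnt b j := by
  induction l with
  | zero => rw [Nat.le_zero.mp hjl]
  | succ l ih =>
    rcases Nat.eq_or_lt_of_le hjl with rfl | hlt
    · rfl
    · rw [cnt_succ_not b (h l (by omega) (by omega)),
        ih (by omega) (fun i hi hi' => h i hi (by omega))]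

lemma cnt_lt_imp (b : ℕ → Prop) {j l : ℕ} (h : cnt b j < cnt b l) :
    ∃ i, j ≤ i ∧ i < l ∧ b i := by
  by_contra hc
  push_neg at hc
  rcases le_or_gt j l with hjl | hjl
  · rw [cnt_congr b hjl (fun i hi hi' => hc i hi hi')] at h; omega
  · have := cnt_mono b hjl.le; omega

lemma cnt_add (b : ℕ → Prop) (x y : ℕ) :
    cnt b (x + y) = cnt b x + cnt (fun i => b (x + i)) y := by
  induction y with
  | zero => simp [cnt]
  | succ y ih =>
    show cnt b (x + y + 1) = _
    by_cases h : b (x + y)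
    · rw [cnt_succ_of b h, ih, cnt_succ_of (fun i => b (x+i)) h]; omega
    · rw [cnt_succ_not b h, ih, cnt_succ_not (fun i => b (x+i)) h]

lemma cnt_all (b : ℕ → Prop) {l : ℕ} (h : ∀ i, i < l → b i) : cnt b l = l := by
  induction l with
  | zero => rfl
  | succ l ih => rw [cnt_succ_of b (h l (by omega)), ih (fun i hi => h i (by omega))]

lemma cnt_none (b : ℕ → Prop) {l : ℕ} (h : ∀ i, i < l → ¬ b i) : cnt b l = 0 := by
  have := cnt_congr b (Nat.zero_le l) (fun i _ hi => h i hi)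
  simpa [cnt] using this

lemma satAt_Fpow_iff {α : Type} (w : ℕ → Set α) (a : α) (m j : ℕ) :
    LTL.satAt w j (LTL.Fpow m (.atom a)) ↔
      ∃ l, j ≤ l ∧ cnt (fun i => a ∈ w i) j + (m+1) ≤ cnt (fun i => a ∈ w i) l := by
  set b : ℕ → Prop := fun i => a ∈ w i with hb
  induction m generalizing j with
  | zero =>
    simp only [LTL.Fpow, LTL.F, LTL.satAt]
    constructor
    · rintro ⟨l, hjl, hbl, -⟩
      refine ⟨l+1, by omega, ?_⟩
      have h1 := cnt_succ_of b hbl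
      have h2 := cnt_mono b hjl
      omega
    · rintro ⟨l, hjl, hcnt⟩
      obtain ⟨i, hji, hil, hbi⟩ := cnt_lt_imp b (j := j) (l := l) (by omega)
      exact ⟨i, hji, hbi, fun _ _ _ => trivial⟩
  | succ m ih =>
    simp only [LTL.Fpow, LTL.F, LTL.satAt]
    constructor
    · rintro ⟨l, hjl, ⟨hbl, hnext⟩, -⟩
      obtain ⟨l', hll', hcnt⟩ := (ih (l+1)).mp hnext
      have h1 := cnt_succ_of b hbl
      have h2 := cnt_mono b hjl
      exact ⟨l', by omega, by omega⟩
    · rintro ⟨l, hjl, hcnt⟩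
      have hlt : cnt b j < cnt b l := by omega
      obtain ⟨i, hji, hil, hbi⟩ := cnt_lt_imp b hlt
      -- take the least such i
      classical
      have hex : ∃ i, j ≤ i ∧ i < l ∧ b i := ⟨i, hji, hil, hbi⟩
      set i0 := Nat.find hex with hi0
      obtain ⟨hji0, hi0l, hbi0⟩ := Nat.find_spec hex
      have hnone : ∀ i', j ≤ i' → i' < i0 → ¬ b i' := by
        intro i' h1 h2 hb'
        exact (Nat.find_min hex h2) ⟨h1, by omega, hb'⟩
      have hc1 : cnt b i0 = cnt b j := cnt_congr b hji0 hnone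
      have hc2 : cnt b (i0+1) = cnt b j + 1 := by rw [cnt_succ_of b hbi0, hc1]
      have hli : i0 + 1 ≤ l := by
        by_contra hco
        have := cnt_mono b (show l ≤ i0 + 1 by omega)
        omega
      refine ⟨i0, hji0, ⟨hbi0, (ih (i0+1)).mpr ⟨l, hli, by omega⟩⟩, fun _ _ _ => trivial⟩

lemma sat_Fpow_iff {α : Type} (w : ℕ → Set α) (a : α) {k : ℕ} (hk : 1 ≤ k) :
    LTL.sat w (LTL.Fpow (k-1) (.atom a)) ↔ ∃ l, k ≤ cnt (fun i => a ∈ w i) l := by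
  rw [LTL.sat, satAt_Fpow_iff]
  have : cnt (fun i => a ∈ w i) 0 = 0 := rfl
  constructor
  · rintro ⟨l, -, h⟩; exact ⟨l, by omega⟩
  · rintro ⟨l, h⟩; exact ⟨l, by omega, by omega⟩

lemma sat_F_iff {α : Type} (w : ℕ → Set α) (a : α) :
    LTL.sat w (LTL.F (.atom a)) ↔ ∃ l, a ∈ w l := by
  simp only [LTL.sat, LTL.F, LTL.satAt]
  constructor
  · rintro ⟨l, -, h, -⟩; exact ⟨l, h⟩
  · rintro ⟨l, h⟩; exact ⟨l, by omega, h, fun _ _ _ => trivial⟩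

lemma cnt_ext {b b' : ℕ → Prop} (h : ∀ i, b i ↔ b' i) (l : ℕ) :
    cnt b l = cnt b' l := by
  induction l with
  | zero => rfl
  | succ l ih =>
    simp only [cnt, ih]
    congr 1
    classical
    exact if_congr (h l) rfl rfl

lemma cnt_le_of_none_from (b : ℕ → Prop) {n l : ℕ} (hn : ∀ i, n ≤ i → ¬ b i) :
    cnt b l ≤ cnt b n := by
  rcases le_or_gt l n with h | h
  · exact cnt_mono b h
  · rw [cnt_congr b h.le (fun i hi _ => hn i hi)]

lemma satAt_map {α β : Type} (f : α → β) (w : ℕ → Set β) (φ : LTL α) (j : ℕ) :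
    LTL.satAt w j (φ.map f) ↔ LTL.satAt (fun i => f ⁻¹' w i) j φ := by
  induction φ generalizing j with
  | tt => simp [LTL.map, LTL.satAt]
  | ff => simp [LTL.map, LTL.satAt]
  | atom a => simp [LTL.map, LTL.satAt, Set.mem_preimage]
  | not φ ih => simp [LTL.map, LTL.satAt, ih]
  | and φ ψ ih1 ih2 => simp [LTL.map, LTL.satAt, ih1, ih2]
  | or φ ψ ih1 ih2 => simp [LTL.map, LTL.satAt, ih1, ih2]
  | next φ ih => simp [LTL.map, LTL.satAt, ih]
  | untl φ ψ ih1 ih2 => simp [LTL.map, LTL.satAt, ih1, ih2]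

lemma sat_phi14 {k : ℕ} (hk : 1 ≤ k) (w : ℕ → Set ((Unit ⊕ Unit) ⊕ (Empty ⊕ Unit))) :
    LTL.sat w (phi14 k) ↔
      ((∃ j, (Sum.inr (Sum.inr ()) : (Unit ⊕ Unit) ⊕ (Empty ⊕ Unit)) ∈ w j) ↔
        ((∃ l, k ≤ cnt (fun i => (Sum.inl (Sum.inl ()) : (Unit ⊕ Unit) ⊕ (Empty ⊕ Unit)) ∈ w i) l) ∧
         (∃ l, k ≤ cnt (fun i => (Sum.inl (Sum.inr ()) : (Unit ⊕ Unit) ⊕ (Empty ⊕ Unit)) ∈ w i) l))) := by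
  have hd := sat_F_iff w (Sum.inr (Sum.inr ()))
  have hv := sat_Fpow_iff w (Sum.inl (Sum.inl ())) hk
  have hh := sat_Fpow_iff w (Sum.inl (Sum.inr ())) hk
  simp only [LTL.sat] at hd hv hh ⊢
  simp only [LTL.F, LTL.satAt] at hd
  unfold phi14 LTL.iff_
  show LTL.satAt w 0 (LTL.or (LTL.and _ _) (LTL.and (LTL.not _) (LTL.not _))) ↔ _
  simp only [LTL.satAt, LTL.F]
  rw [hd, hv, hh]
  constructor
  · rintro (⟨h1, h2, h3⟩ | ⟨h1, h2⟩)
    · exact ⟨fun _ => ⟨h2, h3⟩, fun _ => h1⟩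
    · exact ⟨fun h => absurd h h1, fun h => absurd h h2⟩
  · intro h
    by_cases hA : ∃ l, (Sum.inr (Sum.inr ()) : (Unit ⊕ Unit) ⊕ (Empty ⊕ Unit)) ∈ w l
    · exact Or.inl ⟨hA, (h.mp hA).1, (h.mp hA).2⟩
    · exact Or.inr ⟨hA, fun hbc => hA (h.mpr hbc)⟩

open Classical in
/-- The TGE realizing `phi14 k`: the system counts `v`'s (capped at `k`)
and the environment memory counts `h`'s (capped at `k`). -/
noncomputable def tge14 (k : ℕ) : TGE Unit Unit Empty Unit (Fin (k+1)) (Fin (k+1)) where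
  init := ⟨0, by omega⟩
  m0 := ⟨0, by omega⟩
  trans s x := ⟨min (s.1 + if () ∈ x then 1 else 0) k, by omega⟩
  out s x := (∅, fun m y =>
    (⟨min (m.1 + if () ∈ y then 1 else 0) k, by omega⟩,
     {_u | min (s.1 + if () ∈ x then 1 else 0) k = k ∧
           min (m.1 + if () ∈ y then 1 else 0) k = k}))

open Classical in
lemma tge14_trans_val (k : ℕ) (s : Fin (k+1)) (x : Set Unit) :
    ((tge14 k).trans s x).1 = min (s.1 + if () ∈ x then 1 else 0) k := rfl

open Classical in
lemma tge14_prog (k : ℕ) (s m : Fin (k+1)) (x y : Set Unit) :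
    ((tge14 k).out s x).2 m y =
      (⟨min (m.1 + if () ∈ y then 1 else 0) k, by omega⟩,
       ({_u | min (s.1 + if () ∈ x then 1 else 0) k = k ∧
             min (m.1 + if () ∈ y then 1 else 0) k = k} : Set Unit)) := rfl

lemma tge14_run (k : ℕ) (wV : ℕ → Set Unit) (j : ℕ) :
    ((tge14 k).run wV j).1 = min (cnt (fun i => () ∈ wV i) j) k := by
  induction j with
  | zero =>
    show ((tge14 k).init).1 = min (cnt (fun i => () ∈ wV i) 0) k
    show 0 = min 0 k
    omega
  | succ j ih =>
    show ((tge14 k).trans ((tge14 k).run wV j) (wV j)).1 = _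
    rw [tge14_trans_val, ih]
    simp only [cnt]
    split_ifs <;> omega

lemma tge14_mem (k : ℕ) (wV wH : ℕ → Set Unit) (j : ℕ) :
    ((tge14 k).mem wV wH j).1 = min (cnt (fun i => () ∈ wH i) j) k := by
  induction j with
  | zero =>
    show ((tge14 k).m0).1 = min (cnt (fun i => () ∈ wH i) 0) k
    show 0 = min 0 k
    omega
  | succ j ih =>
    show ((((tge14 k).out ((tge14 k).run wV j) (wV j)).2 ((tge14 k).mem wV wH j) (wH j)).1).1 = _
    rw [tge14_prog]
    show min (((tge14 k).mem wV wH j).1 + _) k = _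
    rw [ih]
    simp only [cnt]
    split_ifs <;> omega

lemma tge14_guided (k : ℕ) (wV wH : ℕ → Set Unit) (j : ℕ) :
    () ∈ (tge14 k).guided wV wH j ↔
      (k ≤ cnt (fun i => () ∈ wV i) (j+1) ∧ k ≤ cnt (fun i => () ∈ wH i) (j+1)) := by
  have hr := tge14_run k wV j
  have hm := tge14_mem k wV wH j
  rw [TGE.guided, tge14_prog]
  simp only [Set.mem_setOf_eq, hr, hm, cnt]
  split_ifs <;> omega

lemma tge_comp_v {ν η γc γg S M : Type} (T : TGE ν η γc γg S M)
    (wV : ℕ → Set ν) (wH : ℕ → Set η) (j : ℕ) (x : ν) :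
    (Sum.inl (Sum.inl x) : (ν ⊕ η) ⊕ (γc ⊕ γg)) ∈ T.comp wV wH j ↔ x ∈ wV j := by
  simp [TGE.comp]

lemma tge_comp_h {ν η γc γg S M : Type} (T : TGE ν η γc γg S M)
    (wV : ℕ → Set ν) (wH : ℕ → Set η) (j : ℕ) (x : η) :
    (Sum.inl (Sum.inr x) : (ν ⊕ η) ⊕ (γc ⊕ γg)) ∈ T.comp wV wH j ↔ x ∈ wH j := by
  simp [TGE.comp]

lemma tge_comp_g {ν η γc γg S M : Type} (T : TGE ν η γc γg S M)
    (wV : ℕ → Set ν) (wH : ℕ → Set η) (j : ℕ) (x : γg) :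
    (Sum.inr (Sum.inr x) : (ν ⊕ η) ⊕ (γc ⊕ γg)) ∈ T.comp wV wH j ↔
      x ∈ T.guided wV wH j := by
  simp [TGE.comp]

lemma tge14_realizes {k : ℕ} (hk : 1 ≤ k) : (tge14 k).Realizes (phi14 k) := by
  intro wV wH
  rw [sat_phi14 hk]
  have e1 : ∀ l, cnt (fun i => (Sum.inl (Sum.inl ()) : (Unit ⊕ Unit) ⊕ (Empty ⊕ Unit)) ∈
      (tge14 k).comp wV wH i) l = cnt (fun i => () ∈ wV i) l :=
    fun l => cnt_ext (fun i => tge_comp_v _ _ _ _ _) l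
  have e2 : ∀ l, cnt (fun i => (Sum.inl (Sum.inr ()) : (Unit ⊕ Unit) ⊕ (Empty ⊕ Unit)) ∈
      (tge14 k).comp wV wH i) l = cnt (fun i => () ∈ wH i) l :=
    fun l => cnt_ext (fun i => tge_comp_h _ _ _ _ _) l
  simp only [e1, e2, tge_comp_g, tge14_guided]
  constructor
  · rintro ⟨j, h1, h2⟩
    exact ⟨⟨j+1, h1⟩, ⟨j+1, h2⟩⟩
  · rintro ⟨⟨l1, h1⟩, ⟨l2, h2⟩⟩
    exact ⟨max l1 l2, le_trans h1 (cnt_mono _ (by omega)),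
      le_trans h2 (cnt_mono _ (by omega))⟩

lemma trans_run_congr {ι o S : Type} (T : Transducer ι o S) {w w' : ℕ → Set ι}
    {j : ℕ} (h : ∀ i, i < j → w i = w' i) : T.run w j = T.run w' j := by
  induction j with
  | zero => rfl
  | succ j ih =>
    show T.trans (T.run w j) (w j) = T.trans (T.run w' j) (w' j)
    rw [ih (fun i hi => h i (by omega)), h j (by omega)]

lemma trans_run_add {ι o S : Type} (T : Transducer ι o S) {w1 w2 : ℕ → Set ι}
    {x1 x2 : ℕ} (h0 : T.run w1 x1 = T.run w2 x2)
    (h : ∀ i, w1 (x1 + i) = w2 (x2 + i)) (t : ℕ) :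
    T.run w1 (x1 + t) = T.run w2 (x2 + t) := by
  induction t with
  | zero => exact h0
  | succ t ih =>
    show T.trans (T.run w1 (x1 + t)) (w1 (x1 + t)) = T.trans (T.run w2 (x2 + t)) (w2 (x2 + t))
    rw [ih, h t]

lemma trans_comp_in {ι o S : Type} (T : Transducer ι o S) (wI : ℕ → Set ι)
    (j : ℕ) (x : ι) : (Sum.inl x : ι ⊕ o) ∈ T.comp wI j ↔ x ∈ wI j := by
  simp [Transducer.comp]

lemma trans_comp_out {ι o S : Type} (T : Transducer ι o S) (wI : ℕ → Set ι)
    (j : ℕ) (y : o) :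
    (Sum.inr y : ι ⊕ o) ∈ T.comp wI j ↔ y ∈ T.out (T.run wI j) (wI j) := by
  simp [Transducer.comp]

/-- The characterization of realizing the mapped `phi14` for a pipeline process. -/
lemma spec_char {S₂ : Type} (P₂ : Transducer (Unit ⊕ Unit) Unit S₂) {k : ℕ} (hk : 1 ≤ k)
    (hreal : P₂.Realizes ((phi14 k).map (Sum.map id (Sum.elim Empty.elim id))))
    (wI : ℕ → Set (Unit ⊕ Unit)) :
    ((∃ j, () ∈ P₂.out (P₂.run wI j) (wI j)) ↔
      ((∃ l, k ≤ cnt (fun i => Sum.inl () ∈ wI i) l) ∧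
       (∃ l, k ≤ cnt (fun i => Sum.inr () ∈ wI i) l))) := by
  have h := hreal wI
  rw [LTL.sat, satAt_map] at h
  have h2 := (sat_phi14 hk (fun i => (Sum.map id (Sum.elim Empty.elim id)) ⁻¹' P₂.comp wI i)).mp h
  have ed : ∀ i, ((Sum.inr (Sum.inr ()) : (Unit ⊕ Unit) ⊕ (Empty ⊕ Unit)) ∈
      (Sum.map id (Sum.elim Empty.elim id)) ⁻¹' P₂.comp wI i) ↔
        () ∈ P₂.out (P₂.run wI i) (wI i) := by
    intro i
    rw [Set.mem_preimage]
    show (Sum.inr () : (Unit ⊕ Unit) ⊕ Unit) ∈ P₂.comp wI i ↔ _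
    exact trans_comp_out P₂ wI i ()
  have ev : ∀ i, ((Sum.inl (Sum.inl ()) : (Unit ⊕ Unit) ⊕ (Empty ⊕ Unit)) ∈
      (Sum.map id (Sum.elim Empty.elim id)) ⁻¹' P₂.comp wI i) ↔ Sum.inl () ∈ wI i := by
    intro i
    rw [Set.mem_preimage]
    show (Sum.inl (Sum.inl ()) : (Unit ⊕ Unit) ⊕ Unit) ∈ P₂.comp wI i ↔ _
    exact trans_comp_in P₂ wI i (Sum.inl ())
  have eh : ∀ i, ((Sum.inl (Sum.inr ()) : (Unit ⊕ Unit) ⊕ (Empty ⊕ Unit)) ∈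
      (Sum.map id (Sum.elim Empty.elim id)) ⁻¹' P₂.comp wI i) ↔ Sum.inr () ∈ wI i := by
    intro i
    rw [Set.mem_preimage]
    show (Sum.inl (Sum.inr ()) : (Unit ⊕ Unit) ⊕ Unit) ∈ P₂.comp wI i ↔ _
    exact trans_comp_in P₂ wI i (Sum.inr ())
  simp only [ed, ev, eh, cnt_ext ev, cnt_ext eh] at h2
  exact h2

/-- The word with `a` `v`'s, then `b` `h`'s, then continuation `c`. -/
noncomputable def pword (a b : ℕ) (c : ℕ → Set (Unit ⊕ Unit)) : ℕ → Set (Unit ⊕ Unit) :=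
  fun j => if j < a then {Sum.inl ()} else if j < a + b then {Sum.inr ()} else c (j - (a + b))

lemma pword_lt {a b : ℕ} (c : ℕ → Set (Unit ⊕ Unit)) {j : ℕ} (h : j < a) :
    pword a b c j = {Sum.inl ()} := by unfold pword; rw [if_pos h]

lemma pword_mid {a b : ℕ} (c : ℕ → Set (Unit ⊕ Unit)) {j : ℕ} (h1 : a ≤ j) (h2 : j < a + b) :
    pword a b c j = {Sum.inr ()} := by unfold pword; rw [if_neg (by omega), if_pos h2]

lemma pword_ge {a b : ℕ} (c : ℕ → Set (Unit ⊕ Unit)) {j : ℕ} (h : a + b ≤ j) :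
    pword a b c j = c (j - (a + b)) := by unfold pword; rw [if_neg (by omega), if_neg (by omega)]

lemma pword_congr {a b : ℕ} (c c' : ℕ → Set (Unit ⊕ Unit)) {j : ℕ} (h : j < a + b) :
    pword a b c j = pword a b c' j := by
  unfold pword
  split_ifs with h1
  · rfl
  · rfl

lemma cnt_pword_v_prefix (a b : ℕ) (c : ℕ → Set (Unit ⊕ Unit)) :
    cnt (fun i => Sum.inl () ∈ pword a b c i) (a + b) = a := by
  rw [cnt_add]
  have h1 : cnt (fun i => Sum.inl () ∈ pword a b c i) a = a :=
    cnt_all _ (fun i hi => by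
      show Sum.inl () ∈ pword a b c i
      rw [pword_lt c hi]; exact rfl)
  have h2 : cnt (fun i => Sum.inl () ∈ pword a b c (a + i)) b = 0 :=
    cnt_none _ (fun i hi => by
      show ¬ Sum.inl () ∈ pword a b c (a + i)
      rw [pword_mid c (by omega) (by omega)]; simp)
  simp only [h1, h2]
  omega

lemma cnt_pword_h_prefix (a b : ℕ) (c : ℕ → Set (Unit ⊕ Unit)) :
    cnt (fun i => Sum.inr () ∈ pword a b c i) (a + b) = b := by
  rw [cnt_add]
  have h1 : cnt (fun i => Sum.inr () ∈ pword a b c i) a = 0 :=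
    cnt_none _ (fun i hi => by
      show ¬ Sum.inr () ∈ pword a b c i
      rw [pword_lt c hi]; simp)
  have h2 : cnt (fun i => Sum.inr () ∈ pword a b c (a + i)) b = b :=
    cnt_all _ (fun i hi => by
      show Sum.inr () ∈ pword a b c (a + i)
      rw [pword_mid c (by omega) (by omega)]; exact rfl)
  simp only [h1, h2]
  omega

lemma no_v_after (a b : ℕ) (c : ℕ → Set (Unit ⊕ Unit)) {n : ℕ} (hn : a + b ≤ n)
    (hc : ∀ i, n - (a + b) ≤ i → Sum.inl () ∉ c i) :
    ∀ i, n ≤ i → ¬ (fun i => Sum.inl () ∈ pword a b c i) i := by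
  intro i hi
  show ¬ Sum.inl () ∈ pword a b c i
  rw [pword_ge c (by omega)]
  exact hc _ (by omega)

lemma no_h_after (a b : ℕ) (c : ℕ → Set (Unit ⊕ Unit)) {n : ℕ} (hn : a + b ≤ n)
    (hc : ∀ i, n - (a + b) ≤ i → Sum.inr () ∉ c i) :
    ∀ i, n ≤ i → ¬ (fun i => Sum.inr () ∈ pword a b c i) i := by
  intro i hi
  show ¬ Sum.inr () ∈ pword a b c i
  rw [pword_ge c (by omega)]
  exact hc _ (by omega)

/-- If the `v`-count of an input word stays below `k`, a realizing `P₂` never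
raises `d` on it. -/
lemma no_d_of_v_bounded {S₂ : Type} (P₂ : Transducer (Unit ⊕ Unit) Unit S₂) {k : ℕ}
    (hk : 1 ≤ k)
    (hreal : P₂.Realizes ((phi14 k).map (Sum.map id (Sum.elim Empty.elim id))))
    (wI : ℕ → Set (Unit ⊕ Unit)) (hb : ∀ l, cnt (fun i => Sum.inl () ∈ wI i) l < k) :
    ∀ j, () ∉ P₂.out (P₂.run wI j) (wI j) := by
  intro j hj
  obtain ⟨⟨l, hl⟩, -⟩ := (spec_char P₂ hk hreal wI).mp ⟨j, hj⟩
  exact absurd hl (by have := hb l; omega)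

lemma no_d_of_h_bounded {S₂ : Type} (P₂ : Transducer (Unit ⊕ Unit) Unit S₂) {k : ℕ}
    (hk : 1 ≤ k)
    (hreal : P₂.Realizes ((phi14 k).map (Sum.map id (Sum.elim Empty.elim id))))
    (wI : ℕ → Set (Unit ⊕ Unit)) (hb : ∀ l, cnt (fun i => Sum.inr () ∈ wI i) l < k) :
    ∀ j, () ∉ P₂.out (P₂.run wI j) (wI j) := by
  intro j hj
  obtain ⟨-, ⟨l, hl⟩⟩ := (spec_char P₂ hk hreal wI).mp ⟨j, hj⟩
  exact absurd hl (by have := hb l; omega)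

lemma distinguish_v {S₂ : Type} (P₂ : Transducer (Unit ⊕ Unit) Unit S₂) {k : ℕ}
    (hk : 1 ≤ k)
    (hreal : P₂.Realizes ((phi14 k).map (Sum.map id (Sum.elim Empty.elim id))))
    {a b a' b' : ℕ} (haa : a < a') (ha' : a' < k)
    (hst : P₂.run (pword a b (fun _ => ∅)) (a + b) =
           P₂.run (pword a' b' (fun _ => ∅)) (a' + b')) : False := by
  classical
  set cA : ℕ → Set (Unit ⊕ Unit) :=
    fun j => if j < k - a' then {Sum.inl ()} else {Sum.inr ()} with hcA
  have hcA_v : ∀ i, i < k - a' → Sum.inl () ∈ cA i := fun i hi => by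
    rw [hcA]; simp only [if_pos hi]; exact rfl
  have hcA_v' : ∀ i, k - a' ≤ i → Sum.inl () ∉ cA i := fun i hi => by
    rw [hcA]; simp only [if_neg (by omega : ¬ i < k - a')]; simp
  have hcA_h : ∀ i, k - a' ≤ i → Sum.inr () ∈ cA i := fun i hi => by
    rw [hcA]; simp only [if_neg (by omega : ¬ i < k - a')]; exact rfl
  set u1 := pword a b cA with hu1
  set u2 := pword a' b' cA with hu2
  set q1 := pword a b (fun _ => ∅) with hq1
  set q2 := pword a' b' (fun _ => ∅) with hq2
  -- u2 has k v's and infinitely many h's, so d must eventually be raised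
  have hv2 : cnt (fun i => Sum.inl () ∈ u2 i) ((a' + b') + (k - a')) = k := by
    rw [cnt_add, cnt_pword_v_prefix]
    have : cnt (fun i => Sum.inl () ∈ u2 ((a' + b') + i)) (k - a') = k - a' :=
      cnt_all _ (fun i hi => by
        show Sum.inl () ∈ u2 ((a' + b') + i)
        rw [hu2, pword_ge cA (by omega)]
        have : a' + b' + i - (a' + b') = i := by omega
        rw [this]; exact hcA_v i hi)
    simp only [this]; omega
  have hh2 : k ≤ cnt (fun i => Sum.inr () ∈ u2 i) (((a' + b') + (k - a')) + k) := by
    rw [cnt_add]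
    have : cnt (fun i => Sum.inr () ∈ u2 (((a' + b') + (k - a')) + i)) k = k :=
      cnt_all _ (fun i hi => by
        show Sum.inr () ∈ u2 (((a' + b') + (k - a')) + i)
        rw [hu2, pword_ge cA (by omega)]
        exact hcA_h _ (by omega))
    simp only [this]; omega
  have hd2 : ∃ j, () ∈ P₂.out (P₂.run u2 j) (u2 j) :=
    (spec_char P₂ hk hreal u2).mpr
      ⟨⟨(a' + b') + (k - a'), by omega⟩, ⟨((a' + b') + (k - a')) + k, hh2⟩⟩
  -- u1 has only a + (k - a') < k v's, so d is never raised
  have hv1 : ∀ l, cnt (fun i => Sum.inl () ∈ u1 i) l < k := by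
    intro l
    have hle : cnt (fun i => Sum.inl () ∈ u1 i) l ≤
        cnt (fun i => Sum.inl () ∈ u1 i) ((a + b) + (k - a')) :=
      cnt_le_of_none_from _ (no_v_after a b cA (by omega)
        (fun i hi => hcA_v' i (by omega)))
    have hval : cnt (fun i => Sum.inl () ∈ u1 i) ((a + b) + (k - a')) = a + (k - a') := by
      rw [cnt_add, cnt_pword_v_prefix]
      have : cnt (fun i => Sum.inl () ∈ u1 ((a + b) + i)) (k - a') = k - a' :=
        cnt_all _ (fun i hi => by
          show Sum.inl () ∈ u1 ((a + b) + i)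
          rw [hu1, pword_ge cA (by omega)]
          have : a + b + i - (a + b) = i := by omega
          rw [this]; exact hcA_v i hi)
      simp only [this]
    omega
  have hnod1 : ∀ j, () ∉ P₂.out (P₂.run u1 j) (u1 j) :=
    no_d_of_v_bounded P₂ hk hreal u1 hv1
  -- q2 has only a' < k v's, so d is never raised
  have hvq2 : ∀ l, cnt (fun i => Sum.inl () ∈ q2 i) l < k := by
    intro l
    have hle : cnt (fun i => Sum.inl () ∈ q2 i) l ≤
        cnt (fun i => Sum.inl () ∈ q2 i) (a' + b') :=
      cnt_le_of_none_from _ (no_v_after a' b' _ (by omega) (fun i _ => by simp))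
    rw [cnt_pword_v_prefix] at hle
    omega
  have hnodq2 : ∀ j, () ∉ P₂.out (P₂.run q2 j) (q2 j) :=
    no_d_of_v_bounded P₂ hk hreal q2 hvq2
  obtain ⟨j, hj⟩ := hd2
  rcases lt_or_ge j (a' + b') with hlt | hge
  · -- the prefix of u2 coincides with q2
    have hrun : P₂.run u2 j = P₂.run q2 j :=
      trans_run_congr P₂ (fun i hi => pword_congr _ _ (by omega))
    have hin : u2 j = q2 j := pword_congr _ _ hlt
    rw [hrun, hin] at hj
    exact hnodq2 j hj
  · -- the suffix of u2 behaves like the suffix of u1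
    have h0 : P₂.run u1 (a + b) = P₂.run u2 (a' + b') := by
      have e1 : P₂.run u1 (a + b) = P₂.run q1 (a + b) :=
        trans_run_congr P₂ (fun i hi => pword_congr _ _ hi)
      have e2 : P₂.run u2 (a' + b') = P₂.run q2 (a' + b') :=
        trans_run_congr P₂ (fun i hi => pword_congr _ _ hi)
      rw [e1, e2]; exact hst
    have hsuf : ∀ i, u1 ((a + b) + i) = u2 ((a' + b') + i) := by
      intro i
      rw [hu1, hu2, pword_ge cA (by omega), pword_ge cA (by omega)]
      have e1 : a + b + i - (a + b) = i := by omega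
      have e2 : a' + b' + i - (a' + b') = i := by omega
      rw [e1, e2]
    set t := j - (a' + b') with ht
    have hj' : j = (a' + b') + t := by omega
    have hrun := trans_run_add P₂ h0 hsuf t
    apply hnod1 ((a + b) + t)
    rw [hrun, hsuf t, ← hj']
    exact hj

lemma distinguish_h {S₂ : Type} (P₂ : Transducer (Unit ⊕ Unit) Unit S₂) {k : ℕ}
    (hk : 1 ≤ k)
    (hreal : P₂.Realizes ((phi14 k).map (Sum.map id (Sum.elim Empty.elim id))))
    {a b a' b' : ℕ} (hbb : b < b') (hb' : b' < k)
    (hst : P₂.run (pword a b (fun _ => ∅)) (a + b) =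
           P₂.run (pword a' b' (fun _ => ∅)) (a' + b')) : False := by
  classical
  set cB : ℕ → Set (Unit ⊕ Unit) :=
    fun j => if j < k - b' then {Sum.inr ()} else {Sum.inl ()} with hcB
  have hcB_h : ∀ i, i < k - b' → Sum.inr () ∈ cB i := fun i hi => by
    rw [hcB]; simp only [if_pos hi]; exact rfl
  have hcB_h' : ∀ i, k - b' ≤ i → Sum.inr () ∉ cB i := fun i hi => by
    rw [hcB]; simp only [if_neg (by omega : ¬ i < k - b')]; simp
  have hcB_v : ∀ i, k - b' ≤ i → Sum.inl () ∈ cB i := fun i hi => by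
    rw [hcB]; simp only [if_neg (by omega : ¬ i < k - b')]; exact rfl
  set u1 := pword a b cB with hu1
  set u2 := pword a' b' cB with hu2
  set q1 := pword a b (fun _ => ∅) with hq1
  set q2 := pword a' b' (fun _ => ∅) with hq2
  have hh2 : cnt (fun i => Sum.inr () ∈ u2 i) ((a' + b') + (k - b')) = k := by
    rw [cnt_add, cnt_pword_h_prefix]
    have : cnt (fun i => Sum.inr () ∈ u2 ((a' + b') + i)) (k - b') = k - b' :=
      cnt_all _ (fun i hi => by
        show Sum.inr () ∈ u2 ((a' + b') + i)
        rw [hu2, pword_ge cB (by omega)]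
        have : a' + b' + i - (a' + b') = i := by omega
        rw [this]; exact hcB_h i hi)
    simp only [this]; omega
  have hv2 : k ≤ cnt (fun i => Sum.inl () ∈ u2 i) (((a' + b') + (k - b')) + k) := by
    rw [cnt_add]
    have : cnt (fun i => Sum.inl () ∈ u2 (((a' + b') + (k - b')) + i)) k = k :=
      cnt_all _ (fun i hi => by
        show Sum.inl () ∈ u2 (((a' + b') + (k - b')) + i)
        rw [hu2, pword_ge cB (by omega)]
        exact hcB_v _ (by omega))
    simp only [this]; omega
  have hd2 : ∃ j, () ∈ P₂.out (P₂.run u2 j) (u2 j) :=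
    (spec_char P₂ hk hreal u2).mpr
      ⟨⟨((a' + b') + (k - b')) + k, hv2⟩, ⟨(a' + b') + (k - b'), by omega⟩⟩
  have hh1 : ∀ l, cnt (fun i => Sum.inr () ∈ u1 i) l < k := by
    intro l
    have hle : cnt (fun i => Sum.inr () ∈ u1 i) l ≤
        cnt (fun i => Sum.inr () ∈ u1 i) ((a + b) + (k - b')) :=
      cnt_le_of_none_from _ (no_h_after a b cB (by omega)
        (fun i hi => hcB_h' i (by omega)))
    have hval : cnt (fun i => Sum.inr () ∈ u1 i) ((a + b) + (k - b')) = b + (k - b') := by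
      rw [cnt_add, cnt_pword_h_prefix]
      have : cnt (fun i => Sum.inr () ∈ u1 ((a + b) + i)) (k - b') = k - b' :=
        cnt_all _ (fun i hi => by
          show Sum.inr () ∈ u1 ((a + b) + i)
          rw [hu1, pword_ge cB (by omega)]
          have : a + b + i - (a + b) = i := by omega
          rw [this]; exact hcB_h i hi)
      simp only [this]
    omega
  have hnod1 : ∀ j, () ∉ P₂.out (P₂.run u1 j) (u1 j) :=
    no_d_of_h_bounded P₂ hk hreal u1 hh1
  have hhq2 : ∀ l, cnt (fun i => Sum.inr () ∈ q2 i) l < k := by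
    intro l
    have hle : cnt (fun i => Sum.inr () ∈ q2 i) l ≤
        cnt (fun i => Sum.inr () ∈ q2 i) (a' + b') :=
      cnt_le_of_none_from _ (no_h_after a' b' _ (by omega) (fun i _ => by simp))
    rw [cnt_pword_h_prefix] at hle
    omega
  have hnodq2 : ∀ j, () ∉ P₂.out (P₂.run q2 j) (q2 j) :=
    no_d_of_h_bounded P₂ hk hreal q2 hhq2
  obtain ⟨j, hj⟩ := hd2
  rcases lt_or_ge j (a' + b') with hlt | hge
  · have hrun : P₂.run u2 j = P₂.run q2 j :=
      trans_run_congr P₂ (fun i hi => pword_congr _ _ (by omega))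
    have hin : u2 j = q2 j := pword_congr _ _ hlt
    rw [hrun, hin] at hj
    exact hnodq2 j hj
  · have h0 : P₂.run u1 (a + b) = P₂.run u2 (a' + b') := by
      have e1 : P₂.run u1 (a + b) = P₂.run q1 (a + b) :=
        trans_run_congr P₂ (fun i hi => pword_congr _ _ hi)
      have e2 : P₂.run u2 (a' + b') = P₂.run q2 (a' + b') :=
        trans_run_congr P₂ (fun i hi => pword_congr _ _ hi)
      rw [e1, e2]; exact hst
    have hsuf : ∀ i, u1 ((a + b) + i) = u2 ((a' + b') + i) := by
      intro i
      rw [hu1, hu2, pword_ge cB (by omega), pword_ge cB (by omega)]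
      have e1 : a + b + i - (a + b) = i := by omega
      have e2 : a' + b' + i - (a' + b') = i := by omega
      rw [e1, e2]
    set t := j - (a' + b') with ht
    have hj' : j = (a' + b') + t := by omega
    have hrun := trans_run_add P₂ h0 hsuf t
    apply hnod1 ((a + b) + t)
    rw [hrun, hsuf t, ← hj']
    exact hj

end Stmt14Aux

/-- `φ_k` is `({v},{h},∅,{d})`-realizable by a TGE whose state
space and memory both have size `O(k)` (at most `k+1`), whereas in the
distributed pipeline architecture without the program channel, the process
`P₂` — a transducer reading both `v` and `h` and producing `d` — needs at
least `k²` states. -/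
theorem stmt14 (k : ℕ) (hk : 1 ≤ k) :
    (∃ (S M : Type) (_ : Fintype S) (_ : Fintype M)
        (T : TGE Unit Unit Empty Unit S M),
        Fintype.card S ≤ k + 1 ∧ Fintype.card M ≤ k + 1 ∧
          T.Realizes (phi14 k)) ∧
    (∀ (S₂ : Type) [Fintype S₂] (P₂ : Transducer (Unit ⊕ Unit) Unit S₂),
        P₂.Realizes ((phi14 k).map (Sum.map id (Sum.elim Empty.elim id))) →
        k ^ 2 ≤ Fintype.card S₂) := by
  constructor
  · exact ⟨Fin (k+1), Fin (k+1), inferInstance, inferInstance, Stmt14Aux.tge14 k,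
      by simp, by simp, Stmt14Aux.tge14_realizes hk⟩
  · intro S₂ _ P₂ hreal
    have hinj : Function.Injective (fun p : Fin k × Fin k =>
        P₂.run (Stmt14Aux.pword p.1 p.2 (fun _ => ∅)) (p.1 + p.2)) := by
      rintro ⟨a, b⟩ ⟨a', b'⟩ heq
      simp only at heq
      by_contra hne
      rcases Nat.lt_trichotomy (a : ℕ) (a' : ℕ) with h | h | h
      · exact Stmt14Aux.distinguish_v P₂ hk hreal h a'.2 heq
      · rcases Nat.lt_trichotomy (b : ℕ) (b' : ℕ) with h2 | h2 | h2
        · exact Stmt14Aux.distinguish_h P₂ hk hreal h2 b'.2 heq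
        · exact hne (Prod.ext (Fin.ext h) (Fin.ext h2))
        · exact Stmt14Aux.distinguish_h P₂ hk hreal h2 b.2 heq.symm
      · exact Stmt14Aux.distinguish_v P₂ hk hreal h a.2 heq.symm
    calc k ^ 2 = Fintype.card (Fin k × Fin k) := by
          simp [Fintype.card_prod, sq]
      _ ≤ Fintype.card S₂ := Fintype.card_le_of_injective _ hinj
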